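/- (Theorem 1, polynomials) If R is an N×N Hermitian positive definite matrix that is block Toeplitz with block size n1, then for all 0 ≤ k < l ≤ N−1: p_{k,l} = U^{k sec n1} p_{k mod n1, l − (k sec n1)} and q_{k,l} = U^{k sec n1} q_{k mod n1, l − (k sec n1)}, where U is the N×N lower shift matrix (U_{i,j} = 1 if i = j+1 and 0 otherwise, so (U^m x)_i = x_{i−m} for i ≥ m and 0 otherwise). -/
import Mathlib


open Matrix
open scoped ComplexOrder

noncomputable section

/-- The `k`-th standard basis vector of `ℂⁿ` (zero if `k ≥ n`). -/
def eVec (n : ℕ) (k : ℕ) : Fin n → ℂ := fun j => if (j : ℕ) = k then 1 else 0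

/-- `vᵀ R w`. -/
def bform {n : ℕ} (R : Matrix (Fin n) (Fin n) ℂ) (v w : Fin n → ℂ) : ℂ :=
  v ⬝ᵥ R.mulVec w

/-- Joint recursion computing the pair `(p_{k,k+d}, q_{k,k+d})`. -/
def pqAux {n : ℕ} (R : Matrix (Fin n) (Fin n) ℂ) : ℕ → ℕ → (Fin n → ℂ) × (Fin n → ℂ)
  | 0, k => (eVec n k, eVec n k)
  | d + 1, k =>
      let p := (pqAux R d k).1
      let q := (pqAux R d (k + 1)).2
      let l := k + d + 1
      let a := bform R p (eVec n l) / bform R q (eVec n l)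
      let a' := bform R q (eVec n k) / bform R p (eVec n k)
      (p - a • q, q - a' • p)

/-- The orthogonal polynomial `p_{k,l}`. -/
def pVec {n : ℕ} (R : Matrix (Fin n) (Fin n) ℂ) (k l : ℕ) : Fin n → ℂ :=
  (pqAux R (l - k) k).1

/-- The orthogonal polynomial `q_{k,l}`. -/
def qVec {n : ℕ} (R : Matrix (Fin n) (Fin n) ℂ) (k l : ℕ) : Fin n → ℂ :=
  (pqAux R (l - k) k).2

/-- The generalized reflection coefficient `a_{k,l}`. -/
def aCoef {n : ℕ} (R : Matrix (Fin n) (Fin n) ℂ) (k l : ℕ) : ℂ :=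
  bform R (pVec R k (l - 1)) (eVec n l) / bform R (qVec R (k + 1) l) (eVec n l)

/-- The generalized reflection coefficient `a'_{k,l}`. -/
def aCoef' {n : ℕ} (R : Matrix (Fin n) (Fin n) ℂ) (k l : ℕ) : ℂ :=
  bform R (qVec R (k + 1) l) (eVec n k) / bform R (pVec R k (l - 1)) (eVec n k)

/-- `v_{k,l} = q_{k,l}ᵀ R e_l`. -/
def vSc {n : ℕ} (R : Matrix (Fin n) (Fin n) ℂ) (k l : ℕ) : ℂ :=
  bform R (qVec R k l) (eVec n l)

/-- `v'_{k,l} = p_{k,l}ᵀ R e_k`. -/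
def vSc' {n : ℕ} (R : Matrix (Fin n) (Fin n) ℂ) (k l : ℕ) : ℂ :=
  bform R (pVec R k l) (eVec n k)

/-- The `N × N` lower shift matrix `U` (`U_{i,j} = 1` iff `i = j + 1`). -/
def shiftU (N : ℕ) : Matrix (Fin N) (Fin N) ℂ :=
  Matrix.of fun i j => if (i : ℕ) = (j : ℕ) + 1 then 1 else 0

namespace Stmt12Aux

variable {N : ℕ}

/-- Shift a vector down by `m` (fills with zeros). -/
def shiftFun (m : ℕ) (v : Fin N → ℂ) : Fin N → ℂ :=
  fun i => if h : m ≤ (i : ℕ) then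
    v ⟨(i : ℕ) - m, lt_of_le_of_lt (Nat.sub_le _ _) i.isLt⟩ else 0

lemma shiftU_mulVec (v : Fin N → ℂ) : (shiftU N).mulVec v = shiftFun 1 v := by
  funext i
  simp only [shiftU, mulVec, dotProduct, shiftFun, of_apply]
  split_ifs with h
  · rw [Finset.sum_eq_single (⟨(i : ℕ) - 1,
      lt_of_le_of_lt (Nat.sub_le _ _) i.isLt⟩ : Fin N)]
    · simp only []
      rw [if_pos (by omega), one_mul]
    · intro b _ hb
      rw [if_neg, zero_mul]
      intro hc
      exact hb (by apply Fin.ext; simp at hc ⊢; omega)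
    · simp
  · apply Finset.sum_eq_zero
    intro b _
    rw [if_neg (by omega), zero_mul]

lemma shiftFun_comp (a b : ℕ) (v : Fin N → ℂ) :
    shiftFun a (shiftFun b v) = shiftFun (a + b) v := by
  funext i
  simp only [shiftFun]
  by_cases h : a + b ≤ (i : ℕ)
  · rw [dif_pos (show a ≤ (i : ℕ) by omega), dif_pos h,
      dif_pos (show b ≤ ((⟨(i : ℕ) - a,
        lt_of_le_of_lt (Nat.sub_le _ _) i.isLt⟩ : Fin N) : ℕ) by simp; omega)]
    congr 1
    apply Fin.ext
    simp
    omega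
  · rw [dif_neg h]
    by_cases h2 : a ≤ (i : ℕ)
    · rw [dif_pos h2, dif_neg (show ¬ b ≤ ((⟨(i : ℕ) - a,
        lt_of_le_of_lt (Nat.sub_le _ _) i.isLt⟩ : Fin N) : ℕ) by simp; omega)]
    · rw [dif_neg h2]

lemma shiftU_pow_mulVec (m : ℕ) (v : Fin N → ℂ) :
    (shiftU N ^ m).mulVec v = shiftFun m v := by
  induction m with
  | zero =>
      funext i
      simp [shiftFun, Matrix.one_mulVec]
  | succ m ih =>
      rw [pow_succ', ← Matrix.mulVec_mulVec, ih, shiftU_mulVec, shiftFun_comp, Nat.add_comm]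

lemma shiftFun_eVec (m k : ℕ) : shiftFun m (eVec N k) = eVec N (k + m) := by
  funext i
  simp only [shiftFun, eVec]
  split_ifs with h1 h2 h3 h3 <;> first | rfl | omega

lemma shiftFun_sub_smul (m : ℕ) (a : ℂ) (v w : Fin N → ℂ) :
    shiftFun m (v - a • w) = shiftFun m v - a • shiftFun m w := by
  funext i
  simp only [shiftFun, Pi.sub_apply, Pi.smul_apply, smul_eq_mul]
  split_ifs <;> simp

/-- Upper support bound for `pqAux`. -/
lemma pqAux_support (R : Matrix (Fin N) (Fin N) ℂ) :
    ∀ d k (j : Fin N), k + d < (j : ℕ) →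
      (pqAux R d k).1 j = 0 ∧ (pqAux R d k).2 j = 0 := by
  intro d
  induction d with
  | zero =>
      intro k j hj
      constructor <;> · simp only [pqAux, eVec]; rw [if_neg (by omega)]
  | succ d ih =>
      intro k j hj
      have h1 := ih k j (by omega)
      have h2 := ih (k + 1) j (by omega)
      constructor <;>
      · simp only [pqAux, Pi.sub_apply, Pi.smul_apply, smul_eq_mul,
          h1.1, h1.2, h2.1, h2.2, mul_zero, sub_zero]

section Toeplitz

variable (n1 : ℕ) (R : Matrix (Fin N) (Fin N) ℂ)
variable (hBT : ∀ (i j : Fin N) (hi : (i : ℕ) + n1 < N) (hj : (j : ℕ) + n1 < N),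
  R ⟨(i : ℕ) + n1, hi⟩ ⟨(j : ℕ) + n1, hj⟩ = R i j)

lemma sum_shiftFun (v F : Fin N → ℂ)
    (hv : ∀ j : Fin N, N ≤ (j : ℕ) + n1 → v j = 0) :
    (∑ j : Fin N, shiftFun n1 v j * F j) =
      ∑ j : Fin N, v j * (if h : (j : ℕ) + n1 < N then F ⟨(j : ℕ) + n1, h⟩ else 0) := by
  have hL : (∑ j : Fin N, shiftFun n1 v j * F j) =
      ∑ j ∈ Finset.univ.filter (fun j : Fin N => n1 ≤ (j : ℕ)), shiftFun n1 v j * F j :=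
    (Finset.sum_filter_of_ne
      (by intro x _ hx; by_contra hc; simp only [shiftFun] at hx
          rw [dif_neg hc, zero_mul] at hx; exact hx rfl)).symm
  have hR : (∑ j : Fin N, v j * (if h : (j : ℕ) + n1 < N then F ⟨(j : ℕ) + n1, h⟩ else 0)) =
      ∑ j ∈ Finset.univ.filter (fun j : Fin N => (j : ℕ) + n1 < N),
        v j * (if h : (j : ℕ) + n1 < N then F ⟨(j : ℕ) + n1, h⟩ else 0) :=
    (Finset.sum_filter_of_ne
      (by intro x _ hx; by_contra hc
          rw [hv x (by omega), zero_mul] at hx; exact hx rfl)).symm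
  rw [hL, hR]
  refine Finset.sum_nbij'
    (fun (j : Fin N) => (⟨(j : ℕ) - n1, lt_of_le_of_lt (Nat.sub_le _ _) j.isLt⟩ : Fin N))
    (fun (j : Fin N) => if h : (j : ℕ) + n1 < N then (⟨(j : ℕ) + n1, h⟩ : Fin N) else j)
    ?_ ?_ ?_ ?_ ?_
  · intro a ha
    simp only [Finset.mem_filter, Finset.mem_univ, true_and] at ha ⊢
    omega
  · intro a ha
    simp only [Finset.mem_filter, Finset.mem_univ, true_and] at ha ⊢
    rw [dif_pos ha]
    simp
  · intro a ha
    simp only [Finset.mem_filter, Finset.mem_univ, true_and] at ha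
    beta_reduce
    rw [dif_pos (show ((⟨(a : ℕ) - n1,
        lt_of_le_of_lt (Nat.sub_le _ _) a.isLt⟩ : Fin N) : ℕ) + n1 < N by simp; omega)]
    apply Fin.ext; simp; omega
  · intro a ha
    simp only [Finset.mem_filter, Finset.mem_univ, true_and] at ha
    beta_reduce
    rw [dif_pos ha]
    apply Fin.ext; simp
  · intro a ha
    simp only [Finset.mem_filter, Finset.mem_univ, true_and] at ha
    beta_reduce
    simp only [shiftFun]
    rw [dif_pos ha, dif_pos (show ((⟨(a : ℕ) - n1,
        lt_of_le_of_lt (Nat.sub_le _ _) a.isLt⟩ : Fin N) : ℕ) + n1 < N by simp; omega)]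
    congr 2 <;> (apply Fin.ext; simp; omega)

include hBT in
lemma bform_shift (v w : Fin N → ℂ)
    (hv : ∀ j : Fin N, N ≤ (j : ℕ) + n1 → v j = 0)
    (hw : ∀ j : Fin N, N ≤ (j : ℕ) + n1 → w j = 0) :
    bform R (shiftFun n1 v) (shiftFun n1 w) = bform R v w := by
  simp only [bform, dotProduct, mulVec]
  rw [sum_shiftFun n1 (F := fun i => ∑ j, R i j * shiftFun n1 w j) v hv]
  apply Finset.sum_congr rfl
  intro i _
  by_cases hi : (i : ℕ) + n1 < N
  · rw [dif_pos hi]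
    congr 1
    have : ∀ j : Fin N, R ⟨(i : ℕ) + n1, hi⟩ j * shiftFun n1 w j =
        shiftFun n1 w j * R ⟨(i : ℕ) + n1, hi⟩ j := fun j => mul_comm _ _
    rw [Finset.sum_congr rfl fun j _ => this j,
      sum_shiftFun n1 (F := fun j => R ⟨(i : ℕ) + n1, hi⟩ j) w hw]
    apply Finset.sum_congr rfl
    intro j _
    by_cases hj : (j : ℕ) + n1 < N
    · rw [dif_pos hj, hBT i j hi hj, mul_comm]
    · rw [hw j (by omega), zero_mul, mul_zero]
  · rw [hv i (by omega), zero_mul, zero_mul]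

lemma shiftFun_zero (v : Fin N → ℂ) : shiftFun 0 v = v := by
  funext i
  simp [shiftFun]

include hBT in
lemma pqAux_shift : ∀ d k, k + d + n1 < N →
    (pqAux R d (k + n1)).1 = shiftFun n1 (pqAux R d k).1 ∧
    (pqAux R d (k + n1)).2 = shiftFun n1 (pqAux R d k).2 := by
  intro d
  induction d with
  | zero =>
      intro k _
      constructor <;>
      · show eVec N (k + n1) = shiftFun n1 (eVec N k)
        rw [shiftFun_eVec]
  | succ d ih =>
      intro k hk
      have ih1 := ih k (by omega)
      have ih2 := ih (k + 1) (by omega)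
      have hsupp_p : ∀ j : Fin N, N ≤ (j : ℕ) + n1 → (pqAux R d k).1 j = 0 := fun j hj =>
        (pqAux_support R d k j (by omega)).1
      have hsupp_q : ∀ j : Fin N, N ≤ (j : ℕ) + n1 → (pqAux R d (k + 1)).2 j = 0 := fun j hj =>
        (pqAux_support R d (k + 1) j (by omega)).2
      have hsupp_el : ∀ j : Fin N, N ≤ (j : ℕ) + n1 → eVec N (k + d + 1) j = 0 := by
        intro j hj; simp only [eVec]; rw [if_neg (by omega)]
      have hsupp_ek : ∀ j : Fin N, N ≤ (j : ℕ) + n1 → eVec N k j = 0 := by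
        intro j hj; simp only [eVec]; rw [if_neg (by omega)]
      have e1 : k + n1 + 1 = (k + 1) + n1 := by omega
      have hp' : (pqAux R d (k + n1)).1 = shiftFun n1 (pqAux R d k).1 := ih1.1
      have hq' : (pqAux R d (k + n1 + 1)).2 = shiftFun n1 (pqAux R d (k + 1)).2 := by
        rw [e1]; exact ih2.2
      have hel : eVec N (k + n1 + d + 1) = shiftFun n1 (eVec N (k + d + 1)) := by
        rw [shiftFun_eVec]
        have : k + n1 + d + 1 = k + d + 1 + n1 := by omega
        rw [this]
      have hek : eVec N (k + n1) = shiftFun n1 (eVec N k) := (shiftFun_eVec n1 k).symm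
      have hb1 : bform R (pqAux R d (k + n1)).1 (eVec N (k + n1 + d + 1)) =
          bform R (pqAux R d k).1 (eVec N (k + d + 1)) := by
        rw [hp', hel]; exact bform_shift n1 R hBT _ _ hsupp_p hsupp_el
      have hb2 : bform R (pqAux R d (k + n1 + 1)).2 (eVec N (k + n1 + d + 1)) =
          bform R (pqAux R d (k + 1)).2 (eVec N (k + d + 1)) := by
        rw [hq', hel]; exact bform_shift n1 R hBT _ _ hsupp_q hsupp_el
      have hb3 : bform R (pqAux R d (k + n1 + 1)).2 (eVec N (k + n1)) =
          bform R (pqAux R d (k + 1)).2 (eVec N k) := by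
        rw [hq', hek]; exact bform_shift n1 R hBT _ _ hsupp_q hsupp_ek
      have hb4 : bform R (pqAux R d (k + n1)).1 (eVec N (k + n1)) =
          bform R (pqAux R d k).1 (eVec N k) := by
        rw [hp', hek]; exact bform_shift n1 R hBT _ _ hsupp_p hsupp_ek
      constructor
      · simp only [pqAux]
        rw [hb1, hb2, hp', hq', shiftFun_sub_smul]
      · simp only [pqAux]
        rw [hb3, hb4, hp', hq', shiftFun_sub_smul]

include hBT in
lemma pqAux_shift_mul : ∀ m d k, k + d + n1 * m < N →
    (pqAux R d (k + n1 * m)).1 = shiftFun (n1 * m) (pqAux R d k).1 ∧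
    (pqAux R d (k + n1 * m)).2 = shiftFun (n1 * m) (pqAux R d k).2 := by
  intro m
  induction m with
  | zero =>
      intro d k _
      simp [shiftFun_zero]
  | succ m ih =>
      intro d k h
      rw [Nat.mul_succ] at h
      have e : k + n1 * (m + 1) = (k + n1) + n1 * m := by rw [Nat.mul_succ]; omega
      have hs := pqAux_shift n1 R hBT d k (by omega)
      have hi := ih d (k + n1) (by omega)
      have e2 : n1 * m + n1 = n1 * (m + 1) := by rw [Nat.mul_succ]
      constructor
      · rw [e, hi.1, hs.1, shiftFun_comp, e2]
      · rw [e, hi.2, hs.2, shiftFun_comp, e2]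

end Toeplitz

end Stmt12Aux

/-- Theorem 1 (polynomials): for a Hermitian positive definite block-Toeplitz matrix with
block size `n1`, `p_{k,l} = U^{k sec n1} p_{k mod n1, l - (k sec n1)}` and
`q_{k,l} = U^{k sec n1} q_{k mod n1, l - (k sec n1)}`, where `U` is the lower shift matrix
and `k sec n1 = n1 * (k / n1)`. -/
theorem stmt12 (n1 n2 : ℕ) (h1 : 1 ≤ n1) (h2 : 1 ≤ n2)
    (R : Matrix (Fin (n1 * n2)) (Fin (n1 * n2)) ℂ) (hR : R.PosDef)
    (hBT : ∀ (i j : ℕ) (hi : i + n1 < n1 * n2) (hj : j + n1 < n1 * n2),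
      R ⟨i + n1, hi⟩ ⟨j + n1, hj⟩ =
        R ⟨i, Nat.lt_of_le_of_lt (Nat.le_add_right i n1) hi⟩
          ⟨j, Nat.lt_of_le_of_lt (Nat.le_add_right j n1) hj⟩) :
    ∀ k l : ℕ, k < l → l ≤ n1 * n2 - 1 →
      pVec R k l =
        (shiftU (n1 * n2) ^ (n1 * (k / n1))).mulVec (pVec R (k % n1) (l - n1 * (k / n1))) ∧
      qVec R k l =
        (shiftU (n1 * n2) ^ (n1 * (k / n1))).mulVec (qVec R (k % n1) (l - n1 * (k / n1))) := by
  intro k l hkl hlN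
  have hN : 1 ≤ n1 * n2 := Nat.one_le_iff_ne_zero.mpr (by positivity)
  have hBT' : ∀ (i j : Fin (n1 * n2)) (hi : (i : ℕ) + n1 < n1 * n2)
      (hj : (j : ℕ) + n1 < n1 * n2),
      R ⟨(i : ℕ) + n1, hi⟩ ⟨(j : ℕ) + n1, hj⟩ = R i j := by
    intro i j hi hj
    exact hBT (i : ℕ) (j : ℕ) hi hj
  have hk : n1 * (k / n1) + k % n1 = k := Nat.div_add_mod k n1
  have key := Stmt12Aux.pqAux_shift_mul n1 R hBT' (k / n1) (l - k) (k % n1) (by omega)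
  have e : k % n1 + n1 * (k / n1) = k := by omega
  rw [e] at key
  have e2 : l - n1 * (k / n1) - k % n1 = l - k := by omega
  constructor
  · rw [pVec, pVec, Stmt12Aux.shiftU_pow_mulVec, e2]
    exact key.1
  · rw [qVec, qVec, Stmt12Aux.shiftU_pow_mulVec, e2]
    exact key.2
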